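/- For every rooted tree decomposition T of a graph G with width k, there exists a rooted tree decomposition T' of G of the same width k in which every non-root node is the home of exactly one vertex of G, i.e., for every non-root node x there is exactly one vertex v with v in the bag of x and v not in the bag of the parent of x. -/

import Mathlib

open SimpleGraph

/-- A rooted tree decomposition of a graph `G` with node type `ι`. -/
structure RootedTD (V : Type) (G : SimpleGraph V) (ι : Type) where
  T : SimpleGraph ι
  tree : T.IsTree
  bag : ι → Finset V
  root : ι
  parent : ι → ι
  parent_root : parent root = root
  parent_adj : ∀ x, x ≠ root → T.Adj x (parent x)
  parent_reach : ∀ x, ∃ n, parent^[n] x = root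
  vert_cover : ∀ v, ∃ x, v ∈ bag x
  edge_cover : ∀ ⦃u v⦄, G.Adj u v → ∃ x, u ∈ bag x ∧ v ∈ bag x
  conn : ∀ (v : V) (x y : ι) (w : T.Walk x y), w.IsPath →
      v ∈ bag x → v ∈ bag y → ∀ z ∈ w.support, v ∈ bag z

/-- D has width exactly k: all bags have size at most k+1 and some bag attains k+1. -/
def RootedTD.HasWidth {V : Type} {G : SimpleGraph V} {ι : Type}
    (D : RootedTD V G ι) (k : ℕ) : Prop :=
  (∀ x, (D.bag x).card ≤ k + 1) ∧ ∃ x, (D.bag x).card = k + 1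

open scoped Classical

namespace TDAux

variable {κ : Type} (root : κ) (par : κ → κ)

/-- depth of a node: least n with par^[n] x = root -/
noncomputable def dep (hre : ∀ x, ∃ n, par^[n] x = root) (x : κ) : ℕ :=
  @Nat.find _ (Classical.decPred _) (hre x)

variable (hre : ∀ x, ∃ n, par^[n] x = root)

theorem dep_spec (x : κ) : par^[dep root par hre x] x = root :=
  @Nat.find_spec _ (Classical.decPred _) (hre x)

theorem dep_le {x : κ} {n : ℕ} (h : par^[n] x = root) : dep root par hre x ≤ n :=
  @Nat.find_le _ _ (Classical.decPred _) (hre x) h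

theorem dep_root : dep root par hre root = 0 :=
  Nat.le_zero.1 (dep_le root par hre (by simp))

theorem dep_eq_zero_iff {x : κ} : dep root par hre x = 0 ↔ x = root := by
  constructor
  · intro h
    have := dep_spec root par hre x
    rwa [h] at this
  · intro h; rw [h]; exact dep_root _ par hre

theorem iter_root (hroot : par root = root) (n : ℕ) : par^[n] root = root := by
  induction n with
  | zero => rfl
  | succ n ih => rw [Function.iterate_succ_apply, hroot, ih]

theorem dep_parent {x : κ} (hx : x ≠ root) :
    dep root par hre x = dep root par hre (par x) + 1 := by
  have h1 : dep root par hre x ≠ 0 := fun h => hx ((dep_eq_zero_iff root par hre).1 h)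
  obtain ⟨s, hs⟩ : ∃ s, dep root par hre x = s + 1 := ⟨_, (Nat.succ_pred_eq_of_pos (Nat.pos_of_ne_zero h1)).symm⟩
  have h2 : par^[s] (par x) = root := by
    have := dep_spec root par hre x
    rwa [hs, Function.iterate_succ_apply] at this
  have h3 : dep root par hre (par x) ≤ s := dep_le root par hre h2
  have h4 : dep root par hre x ≤ dep root par hre (par x) + 1 := by
    apply dep_le root par hre
    rw [Function.iterate_succ_apply]
    exact dep_spec root par hre (par x)
  omega

theorem dep_iter {x : κ} {s : ℕ} (h : s ≤ dep root par hre x) :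
    dep root par hre (par^[s] x) = dep root par hre x - s := by
  induction s generalizing x with
  | zero => simp
  | succ s ih =>
    have hx : x ≠ root := by
      intro h'; rw [h', dep_root _ par hre] at h; omega
    have hd := dep_parent root par hre hx
    rw [Function.iterate_succ_apply]
    rw [ih (x := par x) (by omega)]
    omega

theorem iter_ne_root {x : κ} {s : ℕ} (h : s < dep root par hre x) : par^[s] x ≠ root := by
  intro he
  have := dep_iter root par hre (x := x) (s := s) (le_of_lt h)
  rw [he, dep_root root par hre] at this
  omega

theorem iter_inj {x : κ} {s t : ℕ} (hs : s ≤ dep root par hre x) (ht : t ≤ dep root par hre x)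
    (h : par^[s] x = par^[t] x) : s = t := by
  have h1 := dep_iter root par hre hs
  have h2 := dep_iter root par hre ht
  rw [h, h2] at h1
  omega


theorem range_map_iterate (f : κ → κ) (x : κ) (i : ℕ) :
    (List.range (i+1)).map (fun s => f^[s] x) = x :: (List.range i).map (fun s => f^[s] (f x)) := by
  rw [List.range_succ_eq_map, List.map_cons, List.map_map]
  congr 1

section Graph

variable (T : SimpleGraph κ)

/-- walk from x up its parent chain, i steps -/
noncomputable def chainWalk (hadj : ∀ x, x ≠ root → T.Adj x (par x)) : ∀ (i : ℕ) (x : κ), i ≤ dep root par hre x → T.Walk x (par^[i] x)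
  | 0, _, _ => Walk.nil
  | (i+1), x, h =>
    have hx : x ≠ root := iter_ne_root root par hre (x := x) (s := 0) (by omega)
    have hd : dep root par hre x = dep root par hre (par x) + 1 := dep_parent root par hre hx
    Walk.cons (hadj x hx)
      ((chainWalk hadj i (par x) (by omega)).copy rfl (by rw [← Function.iterate_succ_apply]))

theorem chainWalk_support (hadj : ∀ x, x ≠ root → T.Adj x (par x)) (i : ℕ) (x : κ) (h : i ≤ dep root par hre x) :
    (chainWalk root par hre T hadj i x h).support
      = (List.range (i+1)).map (fun s => par^[s] x) := by
  induction i generalizing x with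
  | zero => simp [chainWalk]
  | succ i ih =>
    rw [chainWalk]
    rw [Walk.support_cons, Walk.support_copy, ih]
    conv_rhs => rw [range_map_iterate]

/-- existence of a "meet" path between any two nodes -/
theorem exists_meet_path (hadj : ∀ x, x ≠ root → T.Adj x (par x)) (x y : κ) :
    ∃ (i j : ℕ) (_ : i ≤ dep root par hre x) (_ : j ≤ dep root par hre y)
      (_ : par^[j] y = par^[i] x) (w : T.Walk x y), w.IsPath ∧
      w.support = ((List.range (i+1)).map fun s => par^[s] x)
        ++ (((List.range j).map fun t => par^[t] y).reverse) := by
  classical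
  have hP : ∃ i, ∃ j ≤ dep root par hre y, par^[j] y = par^[i] x :=
    ⟨dep root par hre x, dep root par hre y, le_rfl, by
      rw [dep_spec root par hre, dep_spec root par hre]⟩
  set i := Nat.find hP with hidef
  obtain ⟨j', hj', hj'eq⟩ := Nat.find_spec hP
  have hQ : ∃ j, par^[j] y = par^[i] x := ⟨j', hj'eq⟩
  set j := Nat.find hQ with hjdef
  have hjspec : par^[j] y = par^[i] x := Nat.find_spec hQ
  have hjle : j ≤ dep root par hre y := le_trans (Nat.find_min' hQ hj'eq) hj'
  have hile : i ≤ dep root par hre x := by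
    apply Nat.find_min' hP
    exact ⟨dep root par hre y, le_rfl, by rw [dep_spec root par hre, dep_spec root par hre]⟩
  -- minimality facts
  have himin : ∀ s < i, ∀ t ≤ dep root par hre y, par^[t] y ≠ par^[s] x := by
    intro s hs t ht heq
    exact Nat.find_min hP hs ⟨t, ht, heq⟩
  have hjmin : ∀ t < j, par^[t] y ≠ par^[i] x := fun t ht => Nat.find_min hQ ht
  refine ⟨i, j, hile, hjle, hjspec, ?_⟩
  set w := (chainWalk root par hre T hadj i x hile).append
      (((chainWalk root par hre T hadj j y hjle).copy rfl hjspec).reverse) with hwdef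
  have hsup : w.support = ((List.range (i+1)).map fun s => par^[s] x)
        ++ (((List.range j).map fun t => par^[t] y).reverse) := by
    rw [hwdef, Walk.support_append, chainWalk_support]
    congr 1
    rw [Walk.support_reverse, Walk.support_copy, chainWalk_support]
    rw [List.range_succ, List.map_append]
    simp [hjspec]
  refine ⟨w, ?_, hsup⟩
  rw [Walk.isPath_def, hsup]
  rw [List.nodup_append]
  have hinj1 : ∀ s ∈ List.range (i+1), ∀ t ∈ List.range (i+1),
      par^[s] x = par^[t] x → s = t := by
    intro s hs t ht heq
    rw [List.mem_range] at hs ht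
    exact iter_inj root par hre (by omega) (by omega) heq
  have hinj2 : ∀ s ∈ List.range j, ∀ t ∈ List.range j,
      par^[s] y = par^[t] y → s = t := by
    intro s hs t ht heq
    rw [List.mem_range] at hs ht
    exact iter_inj root par hre (by omega) (by omega) heq
  refine ⟨List.Nodup.map_on hinj1 List.nodup_range,
    List.nodup_reverse.2 (List.Nodup.map_on hinj2 List.nodup_range), ?_⟩
  intro a ha b hb hab
  subst hab
  rw [List.mem_map] at ha
  rw [List.mem_reverse, List.mem_map] at hb
  obtain ⟨s, hs, rfl⟩ := ha
  obtain ⟨t, ht, heq⟩ := hb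
  rw [List.mem_range] at hs ht
  rcases Nat.lt_or_ge s i with hsi | hsi
  · exact himin s hsi t (by omega) heq
  · have : s = i := by omega
    subst this
    exact hjmin t ht heq

end Graph


theorem closure_chain (S : κ → Prop) (t : κ)
    (hS : ∀ z, S z → z ≠ t → S (par z)) (hrootS : ¬ S root) :
    ∀ z, S z → ∃ i, i ≤ dep root par hre z ∧ par^[i] z = t ∧ ∀ s ≤ i, S (par^[s] z) := by
  suffices h : ∀ N z, dep root par hre z ≤ N → S z →
      ∃ i, i ≤ dep root par hre z ∧ par^[i] z = t ∧ ∀ s ≤ i, S (par^[s] z) by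
    intro z hz; exact h (dep root par hre z) z le_rfl hz
  intro N
  induction N with
  | zero =>
    intro z hd hz
    have hz0 : z = root := (dep_eq_zero_iff root par hre).1 (by omega)
    exact absurd (hz0 ▸ hz) hrootS
  | succ N ih =>
    intro z hd hz
    by_cases hzt : z = t
    · exact ⟨0, by omega, hzt, fun s hs => by
        have : s = 0 := by omega
        rw [this]; exact hz⟩
    · have hzr : z ≠ root := fun h => hrootS (h ▸ hz)
      have hdp : dep root par hre z = dep root par hre (par z) + 1 :=
        dep_parent root par hre hzr
      obtain ⟨i, hi, heq, hmem⟩ := ih (par z) (by omega) (hS z hz hzt)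
      refine ⟨i + 1, by omega, ?_, ?_⟩
      · rw [Function.iterate_succ_apply]; exact heq
      · intro s hs
        match s with
        | 0 => exact hz
        | (s'+1) =>
          rw [Function.iterate_succ_apply]
          exact hmem s' (by omega)

section Tree

theorem reach_of_rank (rank : κ → ℕ) (hroot : par root = root)
    (hrank : ∀ x, x ≠ root → rank (par x) < rank x) :
    ∀ x, ∃ n, par^[n] x = root := by
  suffices h : ∀ N x, rank x ≤ N → ∃ n, par^[n] x = root by
    intro x; exact h (rank x) x le_rfl
  intro N
  induction N with
  | zero =>
    intro x hx
    by_cases hxr : x = root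
    · exact ⟨0, hxr⟩
    · have := hrank x hxr; omega
  | succ N ih =>
    intro x hx
    by_cases hxr : x = root
    · exact ⟨0, hxr⟩
    · obtain ⟨n, hn⟩ := ih (par x) (by have := hrank x hxr; omega)
      exact ⟨n + 1, by rw [Function.iterate_succ_apply]; exact hn⟩

/-- The graph generated by a parent function. -/
def parGraph : SimpleGraph κ := SimpleGraph.fromRel (fun a b => a ≠ root ∧ par a = b)

theorem parGraph_adj {a b : κ} : (parGraph root par).Adj a b ↔
    a ≠ b ∧ ((a ≠ root ∧ par a = b) ∨ (b ≠ root ∧ par b = a)) :=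
  SimpleGraph.fromRel_adj _ a b

theorem mem_support_of_cross (z : κ) {a b : κ} (w : (parGraph root par).Walk a b)
    (ha : ∃ k, par^[k] a = z) (hb : ¬ ∃ k, par^[k] b = z) : z ∈ w.support := by
  induction w with
  | nil => exact absurd ha hb
  | @cons a c b h w ih =>
    by_cases hc : ∃ k, par^[k] c = z
    · rw [Walk.support_cons]
      exact List.mem_cons_of_mem _ (ih hc hb)
    · rw [parGraph_adj] at h
      obtain ⟨hne, h1 | h2⟩ := h
      · obtain ⟨k, hk⟩ := ha
        match k with
        | 0 => rw [Walk.support_cons]; exact hk ▸ List.mem_cons_self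
        | (k'+1) =>
          exfalso; apply hc
          exact ⟨k', by rw [← h1.2, ← Function.iterate_succ_apply]; exact hk⟩
      · exfalso; apply hc
        obtain ⟨k, hk⟩ := ha
        exact ⟨k + 1, by rw [Function.iterate_succ_apply, h2.2]; exact hk⟩


section Unique

theorem iter_dep_le (hroot : par root = root) (y : κ) (k : ℕ) :
    dep root par hre (par^[k] y) ≤ dep root par hre y := by
  by_cases hk : k ≤ dep root par hre y
  · rw [dep_iter root par hre hk]; omega
  · have hr : par^[k] y = root := by
      have : k = (k - dep root par hre y) + dep root par hre y := by omega
      rw [this, Function.iterate_add_apply, dep_spec root par hre,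
        iter_root root par hroot]
    rw [hr, dep_root root par hre]; omega

include hre in
theorem not_desc_of_desc (hroot : par root = root) {x y : κ} (hxy : x ≠ y)
    (hk : ∃ k, par^[k] y = x) : ¬ ∃ l, par^[l] x = y := by
  rintro ⟨l, hl⟩
  obtain ⟨k, hk⟩ := hk
  have h1 : dep root par hre x ≤ dep root par hre y := hk ▸ iter_dep_le root par hre hroot y k
  have h2 : dep root par hre y ≤ dep root par hre x := hl ▸ iter_dep_le root par hre hroot x l
  by_cases hky : k ≤ dep root par hre y
  · have := dep_iter root par hre hky
    rw [hk] at this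
    have hk0 : k = 0 := by omega
    rw [hk0] at hk
    exact hxy hk.symm
  · have hxr : x = root := by
      rw [← hk]
      have : k = (k - dep root par hre y) + dep root par hre y := by omega
      rw [this, Function.iterate_add_apply, dep_spec root par hre,
        iter_root root par hroot]
    have hyr : y = root := by
      rw [← hl, hxr, iter_root root par hroot]
    exact hxy (hxr.trans hyr.symm)

theorem unique_path_step (hroot : par root = root) (N : ℕ)
    (IH : ∀ x y, dep root par hre x + dep root par hre y ≤ N →
      ∀ p q : (parGraph root par).Walk x y, p.IsPath → q.IsPath → p = q)
    (x y : κ) (hxy : x ≠ y) (hnd : ¬ ∃ k, par^[k] y = x)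
    (hdep : dep root par hre x + dep root par hre y ≤ N + 1)
    (p q : (parGraph root par).Walk x y) (hp : p.IsPath) (hq : q.IsPath) : p = q := by
  have hxr : x ≠ root := by
    intro hh
    exact hnd ⟨dep root par hre y, (dep_spec root par hre y).trans hh.symm⟩
  have hfirst : ∀ (c : κ) (h : (parGraph root par).Adj x c) (p' : (parGraph root par).Walk c y),
      (Walk.cons h p').IsPath → c = par x := by
    intro c h p' hp'
    rw [parGraph_adj] at h
    obtain ⟨hne, h1 | h2⟩ := h
    · exact h1.2.symm
    · exfalso
      have hx : x ∈ p'.support := by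
        apply mem_support_of_cross root par x p' ⟨1, by simpa using h2.2⟩ hnd
      rw [Walk.cons_isPath_iff] at hp'
      exact hp'.2 hx
  cases p with
  | nil => exact absurd rfl hxy
  | @cons _ c _ h p' =>
    cases q with
    | nil => exact absurd rfl hxy
    | @cons _ c' _ h' q' =>
      have hc : c = par x := hfirst c h p' hp
      have hc' : c' = par x := hfirst c' h' q' hq
      subst hc
      subst hc'
      have hdx : dep root par hre x = dep root par hre (par x) + 1 :=
        dep_parent root par hre hxr
      have heq : p' = q' := IH (par x) y (by omega) p' q'
        (hp.of_cons) (hq.of_cons)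
      rw [heq]

include hre in
theorem unique_path (hroot : par root = root) :
    ∀ (x y : κ) (p q : (parGraph root par).Walk x y), p.IsPath → q.IsPath → p = q := by
  suffices h : ∀ N x y, dep root par hre x + dep root par hre y ≤ N →
      ∀ p q : (parGraph root par).Walk x y, p.IsPath → q.IsPath → p = q by
    intro x y; exact h _ x y le_rfl
  intro N
  induction N with
  | zero =>
    intro x y hd p q hp hq
    have hx : x = root := (dep_eq_zero_iff root par hre).1 (by omega)
    have hy : y = root := (dep_eq_zero_iff root par hre).1 (by omega)
    subst hx
    subst hy
    rw [Walk.isPath_iff_eq_nil] at hp hq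
    rw [hp, hq]
  | succ N ih =>
    intro x y hd p q hp hq
    by_cases hxy : x = y
    · subst hxy
      rw [Walk.isPath_iff_eq_nil] at hp hq
      rw [hp, hq]
    · by_cases hnd : ∃ k, par^[k] y = x
      · have hnd' : ¬ ∃ l, par^[l] x = y := not_desc_of_desc root par hre hroot hxy hnd
        have hrev := unique_path_step root par hre hroot N ih y x (Ne.symm hxy) hnd'
          (by omega) p.reverse q.reverse hp.reverse hq.reverse
        have := congrArg Walk.reverse hrev
        simpa [Walk.reverse_reverse] using this
      · exact unique_path_step root par hre hroot N ih x y hxy hnd (by omega) p q hp hq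

include hre in
theorem parGraph_reachable_root (hroot : par root = root) (x : κ) :
    (parGraph root par).Reachable x root := by
  suffices h : ∀ N x, dep root par hre x ≤ N → (parGraph root par).Reachable x root by
    exact h _ x le_rfl
  intro N
  induction N with
  | zero =>
    intro x hd
    have hx : x = root := (dep_eq_zero_iff root par hre).1 (by omega)
    rw [hx]
  | succ N ih =>
    intro x hd
    by_cases hxr : x = root
    · rw [hxr]
    · have hdx : dep root par hre x = dep root par hre (par x) + 1 :=
        dep_parent root par hre hxr
      have hadj : (parGraph root par).Adj x (par x) := by
        rw [parGraph_adj]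
        refine ⟨?_, Or.inl ⟨hxr, rfl⟩⟩
        intro hxp
        rw [← hxp] at hdx
        omega
      exact hadj.reachable.trans (ih (par x) (by omega))

include hre in
theorem parGraph_isTree (hroot : par root = root) : (parGraph root par).IsTree := by
  classical
  rw [isTree_iff_existsUnique_path]
  refine ⟨⟨root⟩, fun a b => ?_⟩
  have hr : (parGraph root par).Reachable a b :=
    (parGraph_reachable_root root par hre hroot a).trans
      (parGraph_reachable_root root par hre hroot b).symm
  obtain ⟨w⟩ := hr
  exact ⟨w.toPath.1, w.toPath.2, fun q hq =>
    unique_path root par hre hroot a b q w.toPath.1 hq w.toPath.2⟩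

end Unique

end Tree


section OldD

variable {V ι : Type} {G : SimpleGraph V}

/-- depth in the old decomposition -/
noncomputable def dd (D : RootedTD V G ι) : ι → ℕ := dep D.root D.parent D.parent_reach

theorem bag_chain (D : RootedTD V G ι) (v : V) (x y : ι)
    (hx : v ∈ D.bag x) (hy : v ∈ D.bag y) :
    ∃ i, i ≤ dd D x ∧ ∃ j, j ≤ dd D y ∧ D.parent^[j] y = D.parent^[i] x ∧
      (∀ s ≤ i, v ∈ D.bag (D.parent^[s] x)) ∧ (∀ t < j, v ∈ D.bag (D.parent^[t] y)) := by
  obtain ⟨i, j, hi, hj, heq, w, hw, hsup⟩ :=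
    exists_meet_path D.root D.parent D.parent_reach D.T D.parent_adj x y
  have hall := D.conn v x y w hw hx hy
  refine ⟨i, hi, j, hj, heq, ?_, ?_⟩
  · intro s hs
    apply hall
    rw [hsup]
    apply List.mem_append_left
    exact List.mem_map.2 ⟨s, List.mem_range.2 (by omega), rfl⟩
  · intro t ht
    apply hall
    rw [hsup]
    apply List.mem_append_right
    rw [List.mem_reverse]
    exact List.mem_map.2 ⟨t, List.mem_range.2 (by omega), rfl⟩

theorem exists_home (D : RootedTD V G ι) (v : V) :
    ∃ x, v ∈ D.bag x ∧ (x = D.root ∨ v ∉ D.bag (D.parent x)) := by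
  obtain ⟨x₀, hx₀⟩ := D.vert_cover v
  suffices h : ∀ N x, dd D x ≤ N → v ∈ D.bag x →
      ∃ x', v ∈ D.bag x' ∧ (x' = D.root ∨ v ∉ D.bag (D.parent x')) by
    exact h _ x₀ le_rfl hx₀
  intro N
  induction N with
  | zero =>
    intro x hdx hx
    exact ⟨x, hx, Or.inl ((dep_eq_zero_iff D.root D.parent D.parent_reach).1 (by unfold dd at hdx; omega))⟩
  | succ N ih =>
    intro x hdx hx
    by_cases hxr : x = D.root
    · exact ⟨x, hx, Or.inl hxr⟩
    · by_cases hp : v ∈ D.bag (D.parent x)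
      · have := dep_parent D.root D.parent D.parent_reach hxr
        exact ih (D.parent x) (by unfold dd at *; omega) hp
      · exact ⟨x, hx, Or.inr hp⟩

/-- the home of a vertex in the old decomposition -/
noncomputable def home (D : RootedTD V G ι) (v : V) : ι := Classical.choose (exists_home D v)

theorem home_mem (D : RootedTD V G ι) (v : V) : v ∈ D.bag (home D v) :=
  (Classical.choose_spec (exists_home D v)).1

theorem home_prop (D : RootedTD V G ι) (v : V) :
    home D v = D.root ∨ v ∉ D.bag (D.parent (home D v)) :=
  (Classical.choose_spec (exists_home D v)).2

theorem home_anc (D : RootedTD V G ι) (v : V) (z : ι) (hz : v ∈ D.bag z) :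
    ∃ i, i ≤ dd D z ∧ D.parent^[i] z = home D v ∧ ∀ s ≤ i, v ∈ D.bag (D.parent^[s] z) := by
  obtain ⟨i, hi, j, hj, heq, hxs, hyt⟩ := bag_chain D v z (home D v) hz (home_mem D v)
  rcases home_prop D v with hr | hnp
  · -- home is the root
    refine ⟨i, hi, ?_, hxs⟩
    rw [← heq, hr, iter_root D.root D.parent D.parent_root, ← hr]
  · -- v not in parent of home
    match j with
    | 0 => exact ⟨i, hi, heq ▸ rfl, hxs⟩
    | 1 =>
      exfalso
      apply hnp
      have h1 : v ∈ D.bag (D.parent^[i] z) := hxs i le_rfl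
      rw [← heq] at h1
      simpa using h1
    | (j'+2) =>
      exfalso
      apply hnp
      have h1 := hyt 1 (by omega)
      simpa using h1

theorem home_unique (D : RootedTD V G ι) (v : V) (z : ι) (hz : v ∈ D.bag z)
    (h : z = D.root ∨ v ∉ D.bag (D.parent z)) : z = home D v := by
  obtain ⟨i, hi, heq, hmem⟩ := home_anc D v z hz
  match i with
  | 0 => exact heq ▸ rfl
  | (i'+1) =>
    rcases h with hr | hnp
    · rw [← heq, hr, iter_root D.root D.parent D.parent_root]
    · exfalso
      apply hnp
      have := hmem 1 (by omega)
      simpa using this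

theorem home_mem_parent (D : RootedTD V G ι) (v : V) (z : ι) (hz : v ∈ D.bag z)
    (hne : home D v ≠ z) : v ∈ D.bag (D.parent z) := by
  obtain ⟨i, hi, heq, hmem⟩ := home_anc D v z hz
  match i with
  | 0 => exact absurd heq.symm (by simpa using hne)
  | (i'+1) =>
    have := hmem 1 (by omega)
    simpa using this

theorem home_of_mem_root (D : RootedTD V G ι) (v : V) (hv : v ∈ D.bag D.root) :
    home D v = D.root := (home_unique D v D.root hv (Or.inl rfl)).symm

theorem not_mem_strict_anc (D : RootedTD V G ι) (v : V) {t : ℕ} (ht1 : 1 ≤ t)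
    (ht2 : t ≤ dd D (home D v)) : v ∉ D.bag (D.parent^[t] (home D v)) := by
  intro hmem
  obtain ⟨i, hi, heq, _⟩ := home_anc D v _ hmem
  have h1 : dd D (D.parent^[i] (D.parent^[t] (home D v))) ≤ dd D (D.parent^[t] (home D v)) :=
    iter_dep_le D.root D.parent D.parent_reach D.parent_root _ i
  rw [heq] at h1
  have h2 : dd D (D.parent^[t] (home D v)) = dd D (home D v) - t :=
    dep_iter D.root D.parent D.parent_reach ht2
  unfold dd at *
  omega

end OldD


section NewD

variable {V ι : Type} [Fintype V] [LinearOrder V] {G : SimpleGraph V} (D : RootedTD V G ι)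

/-- vertices whose home is x -/
noncomputable def newAt (x : ι) : Finset V := Finset.univ.filter (fun w => home D w = x)

theorem mem_newAt {D : RootedTD V G ι} {w : V} {x : ι} : w ∈ newAt D x ↔ home D w = x := by
  simp [newAt]

/-- earlier siblings at the same home -/
noncomputable def prevSet (v : V) : Finset V := (newAt D (home D v)).filter (fun w => w < v)

theorem mem_prevSet {D : RootedTD V G ι} {w v : V} : w ∈ prevSet D v ↔ home D w = home D v ∧ w < v := by
  simp [prevSet, mem_newAt]

/-- bags of the new decomposition -/
noncomputable def bagO : Option V → Finset V
  | none => ∅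
  | some v => (D.bag (home D v)).filter (fun u => home D u ≠ home D v ∨ u ≤ v)

theorem mem_bagO_some {D : RootedTD V G ι} {u v : V} :
    u ∈ bagO D (some v) ↔ u ∈ D.bag (home D v) ∧ (home D u ≠ home D v ∨ u ≤ v) := by
  simp [bagO]

/-- parent function of the new decomposition -/
noncomputable def parentO : Option V → Option V
  | none => none
  | some v =>
    if h : (prevSet D v).Nonempty then some ((prevSet D v).max' h)
    else if h2 : ∃ t, 1 ≤ t ∧ t ≤ dd D (home D v) ∧
        (newAt D (D.parent^[t] (home D v))).Nonempty then
      some ((newAt D (D.parent^[Nat.find h2] (home D v))).max' (Nat.find_spec h2).2.2)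
    else none

/-- rank function showing the parent relation is well-founded -/
noncomputable def rankO : Option V → ℕ
  | none => 0
  | some v => dd D (home D v) * (Fintype.card V + 1) +
      ((newAt D (home D v)).filter (fun w => w ≤ v)).card

theorem mem_bagO_self (v : V) : v ∈ bagO D (some v) :=
  mem_bagO_some.2 ⟨home_mem D v, Or.inr le_rfl⟩

theorem bagO_card_le {k : ℕ} (hb : ∀ x, (D.bag x).card ≤ k + 1) (z : Option V) :
    (bagO D z).card ≤ k + 1 := by
  match z with
  | none => simp [bagO]
  | some v => exact le_trans (Finset.card_filter_le _ _) (hb _)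

theorem bagO_closure (v : V) (z : Option V) (hz : v ∈ bagO D z) (hne : z ≠ some v) :
    v ∈ bagO D (parentO D z) := by
  match z with
  | none => simp [bagO] at hz
  | some w =>
    rw [mem_bagO_some] at hz
    obtain ⟨hvb, hcond⟩ := hz
    have hvw : v ≠ w := fun h => hne (by rw [h])
    rw [parentO]
    split_ifs with h1 h2
    · -- previous sibling case
      have hu₀mem := Finset.max'_mem _ h1
      rw [mem_prevSet] at hu₀mem
      rw [mem_bagO_some, hu₀mem.1]
      refine ⟨hvb, ?_⟩
      by_cases hvh : home D v = home D w
      · right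
        have hvle : v ≤ w := hcond.resolve_left (not_not.2 hvh)
        have hvlt : v < w := lt_of_le_of_ne hvle hvw
        exact Finset.le_max' _ v (mem_prevSet.2 ⟨hvh, hvlt⟩)
      · exact Or.inl hvh
    · -- ancestor case
      have hvh : home D v ≠ home D w := by
        intro hvh
        have hvle : v ≤ w := hcond.resolve_left (not_not.2 hvh)
        exact h1 ⟨v, mem_prevSet.2 ⟨hvh, lt_of_le_of_ne hvle hvw⟩⟩
      obtain ⟨i, hi, heq, hmem⟩ := home_anc D v (home D w) hvb
      have hi1 : 1 ≤ i := by
        rcases Nat.eq_zero_or_pos i with h0 | h0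
        · exfalso; apply hvh; rw [← heq, h0]; rfl
        · omega
      have ht₀le : Nat.find h2 ≤ i :=
        Nat.find_min' h2 ⟨hi1, hi, ⟨v, mem_newAt.2 heq.symm⟩⟩
      have hu₁mem := Finset.max'_mem _ (Nat.find_spec h2).2.2
      rw [mem_newAt] at hu₁mem
      rw [mem_bagO_some, hu₁mem]
      refine ⟨hmem _ (by omega), ?_⟩
      by_cases hva : home D v = D.parent^[Nat.find h2] (home D w)
      · right
        exact Finset.le_max' _ v (mem_newAt.2 hva)
      · exact Or.inl hva
    · -- impossible: there is an ancestor with a new vertex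
      exfalso
      have hvh : home D v ≠ home D w := by
        intro hvh
        have hvle : v ≤ w := hcond.resolve_left (not_not.2 hvh)
        exact h1 ⟨v, mem_prevSet.2 ⟨hvh, lt_of_le_of_ne hvle hvw⟩⟩
      obtain ⟨i, hi, heq, hmem⟩ := home_anc D v (home D w) hvb
      have hi1 : 1 ≤ i := by
        rcases Nat.eq_zero_or_pos i with h0 | h0
        · exfalso; apply hvh; rw [← heq, h0]; rfl
        · omega
      exact h2 ⟨i, hi1, hi, ⟨v, mem_newAt.2 heq.symm⟩⟩

theorem bagO_uniqueHome (v : V) :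
    ∃! u, u ∈ bagO D (some v) ∧ u ∉ bagO D (parentO D (some v)) := by
  constructor
  case w => exact v
  constructor
  · constructor
    · exact mem_bagO_self D v
    · rw [parentO]
      split_ifs with h1 h2
      · intro hmem
        have hu₀mem := Finset.max'_mem _ h1
        rw [mem_prevSet] at hu₀mem
        rw [mem_bagO_some, hu₀mem.1] at hmem
        rcases hmem.2 with hc | hc
        · exact hc rfl
        · exact absurd (lt_of_le_of_lt hc hu₀mem.2) (lt_irrefl v)
      · intro hmem
        have hu₁mem := Finset.max'_mem _ (Nat.find_spec h2).2.2
        rw [mem_newAt] at hu₁mem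
        rw [mem_bagO_some, hu₁mem] at hmem
        exact not_mem_strict_anc D v (Nat.find_spec h2).1 (Nat.find_spec h2).2.1 hmem.1
      · simp [bagO]
  · rintro u ⟨hu1, hu2⟩
    by_contra hne
    rw [mem_bagO_some] at hu1
    obtain ⟨hub, hucond⟩ := hu1
    apply hu2
    rw [parentO]
    split_ifs with h1 h2
    · -- previous sibling exists
      have hu₀mem := Finset.max'_mem _ h1
      rw [mem_prevSet] at hu₀mem
      rw [mem_bagO_some, hu₀mem.1]
      refine ⟨hub, ?_⟩
      by_cases hhu : home D u = home D v
      · right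
        have hule : u ≤ v := hucond.resolve_left (not_not.2 hhu)
        exact Finset.le_max' _ u (mem_prevSet.2 ⟨hhu, lt_of_le_of_ne hule hne⟩)
      · exact Or.inl hhu
    · -- ancestor case
      have hhu : home D u ≠ home D v := by
        intro hhu
        have hule : u ≤ v := hucond.resolve_left (not_not.2 hhu)
        exact h1 ⟨u, mem_prevSet.2 ⟨hhu, lt_of_le_of_ne hule hne⟩⟩
      obtain ⟨i, hi, heq, hmem⟩ := home_anc D u (home D v) hub
      have hi1 : 1 ≤ i := by
        rcases Nat.eq_zero_or_pos i with h0 | h0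
        · exact absurd (by rw [← heq, h0]; rfl) hhu
        · omega
      have ht₀le : Nat.find h2 ≤ i :=
        Nat.find_min' h2 ⟨hi1, hi, ⟨u, mem_newAt.2 heq.symm⟩⟩
      have hu₁mem := Finset.max'_mem _ (Nat.find_spec h2).2.2
      rw [mem_newAt] at hu₁mem
      rw [mem_bagO_some, hu₁mem]
      refine ⟨hmem _ (by omega), ?_⟩
      by_cases hva : home D u = D.parent^[Nat.find h2] (home D v)
      · exact Or.inr (Finset.le_max' _ u (mem_newAt.2 hva))
      · exact Or.inl hva
    · -- impossible
      exfalso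
      have hhu : home D u ≠ home D v := by
        intro hhu
        have hule : u ≤ v := hucond.resolve_left (not_not.2 hhu)
        exact h1 ⟨u, mem_prevSet.2 ⟨hhu, lt_of_le_of_ne hule hne⟩⟩
      obtain ⟨i, hi, heq, hmem⟩ := home_anc D u (home D v) hub
      have hi1 : 1 ≤ i := by
        rcases Nat.eq_zero_or_pos i with h0 | h0
        · exact absurd (by rw [← heq, h0]; rfl) hhu
        · omega
      exact h2 ⟨i, hi1, hi, ⟨u, mem_newAt.2 heq.symm⟩⟩

theorem rankO_lt (z : Option V) (hz : z ≠ none) : rankO D (parentO D z) < rankO D z := by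
  match z with
  | none => exact absurd rfl hz
  | some v =>
    rw [parentO]
    split_ifs with h1 h2
    · -- previous sibling
      have hu₀mem := Finset.max'_mem _ h1
      rw [mem_prevSet] at hu₀mem
      show rankO D (some _) < rankO D (some v)
      rw [rankO, rankO, hu₀mem.1]
      have hss : (newAt D (home D v)).filter (fun w => w ≤ (prevSet D v).max' h1) ⊂
          (newAt D (home D v)).filter (fun w => w ≤ v) := by
        refine Finset.ssubset_iff_of_subset ?_ |>.2 ?_
        · intro w hw
          rw [Finset.mem_filter] at hw ⊢
          exact ⟨hw.1, le_trans hw.2 (le_of_lt hu₀mem.2)⟩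
        · refine ⟨v, ?_, ?_⟩
          · rw [Finset.mem_filter]
            exact ⟨mem_newAt.2 rfl, le_rfl⟩
          · rw [Finset.mem_filter]
            push_neg
            intro _
            exact hu₀mem.2
      have := Finset.card_lt_card hss
      omega
    · -- ancestor
      have hu₁mem := Finset.max'_mem _ (Nat.find_spec h2).2.2
      rw [mem_newAt] at hu₁mem
      show rankO D (some _) < rankO D (some v)
      rw [rankO, rankO, hu₁mem]
      have ht1 : 1 ≤ Nat.find h2 := (Nat.find_spec h2).1
      have ht2 : Nat.find h2 ≤ dd D (home D v) := (Nat.find_spec h2).2.1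
      have hdlt : dd D (D.parent^[Nat.find h2] (home D v)) = dd D (home D v) - Nat.find h2 := by
        unfold dd
        exact dep_iter D.root D.parent D.parent_reach ht2
      obtain ⟨a', ha'⟩ : ∃ a', dd D (home D v) = a' + 1 := ⟨dd D (home D v) - 1, by omega⟩
      have hble : dd D (D.parent^[Nat.find h2] (home D v)) ≤ a' := by omega
      have hcard : ((newAt D (D.parent^[Nat.find h2] (home D v))).filter
          (fun w => w ≤ (newAt D (D.parent^[Nat.find h2] (home D v))).max'
            (Nat.find_spec h2).2.2)).card ≤ Fintype.card V :=
        le_trans (Finset.card_filter_le _ _) (le_trans (Finset.card_filter_le _ _)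
          (by rw [Finset.card_univ]))
      have hmul : dd D (D.parent^[Nat.find h2] (home D v)) * (Fintype.card V + 1) ≤
          a' * (Fintype.card V + 1) := Nat.mul_le_mul_right _ hble
      have hexp : dd D (home D v) * (Fintype.card V + 1)
          = a' * (Fintype.card V + 1) + (Fintype.card V + 1) := by
        rw [ha', add_mul, one_mul]
      omega
    · -- to root
      show rankO D none < rankO D (some v)
      rw [rankO, rankO]
      have : 0 < ((newAt D (home D v)).filter (fun w => w ≤ v)).card := by
        rw [Finset.card_pos]
        exact ⟨v, by rw [Finset.mem_filter]; exact ⟨mem_newAt.2 rfl, le_rfl⟩⟩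
      omega

theorem attain_new {k : ℕ} (x : ι) (hx : (D.bag x).card = k + 1)
    (hnew : (newAt D x).Nonempty) : ∃ v, (bagO D (some v)).card = k + 1 := by
  have hwm : home D ((newAt D x).max' hnew) = x := mem_newAt.1 (Finset.max'_mem _ _)
  have hbag : bagO D (some ((newAt D x).max' hnew)) = D.bag x := by
    ext u
    rw [mem_bagO_some, hwm]
    constructor
    · exact fun h => h.1
    · intro hu
      refine ⟨hu, ?_⟩
      by_cases hhu : home D u = x
      · exact Or.inr (Finset.le_max' _ u (mem_newAt.2 hhu))
      · exact Or.inl hhu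
  exact ⟨_, by rw [hbag, hx]⟩

theorem attain_root {k : ℕ} (x : ι) (hx : (D.bag x).card = k + 1)
    (hnew : ¬ (newAt D x).Nonempty) (hxr : x = D.root) :
    ∃ v, (bagO D (some v)).card = k + 1 := by
  exfalso
  have hempty : D.bag x = ∅ := by
    apply Finset.eq_empty_of_forall_notMem
    intro u hu
    exact hnew ⟨u, mem_newAt.2 (by rw [hxr]; exact home_of_mem_root D u (hxr ▸ hu))⟩
  rw [hempty] at hx
  simp at hx

theorem bagO_attain {k : ℕ} (hb : ∀ x, (D.bag x).card ≤ k + 1) :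
    ∀ (x : ι), (D.bag x).card = k + 1 → ∃ v, (bagO D (some v)).card = k + 1 := by
  suffices h : ∀ N x, dd D x ≤ N → (D.bag x).card = k + 1 →
      ∃ v, (bagO D (some v)).card = k + 1 by
    intro x hx; exact h _ x le_rfl hx
  intro N
  induction N with
  | zero =>
    intro x hdx hx
    by_cases hnew : (newAt D x).Nonempty
    · exact attain_new D x hx hnew
    · refine attain_root D x hx hnew ?_
      unfold dd at hdx
      exact (dep_eq_zero_iff D.root D.parent D.parent_reach).1 (by omega)
  | succ N ih =>
    intro x hdx hx
    by_cases hnew : (newAt D x).Nonempty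
    · exact attain_new D x hx hnew
    · by_cases hxr : x = D.root
      · exact attain_root D x hx hnew hxr
      · have hsub : D.bag x ⊆ D.bag (D.parent x) := by
          intro u hu
          refine home_mem_parent D u x hu ?_
          intro hh
          exact hnew ⟨u, mem_newAt.2 hh⟩
        have hc : (D.bag (D.parent x)).card = k + 1 :=
          le_antisymm (hb _) (hx ▸ Finset.card_le_card hsub)
        have hd : dd D x = dd D (D.parent x) + 1 := dep_parent D.root D.parent D.parent_reach hxr
        exact ih (D.parent x) (by omega) hc

theorem bagO_edge (u v : V) (x : ι) (hu : u ∈ D.bag x) (hv : v ∈ D.bag x) :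
    ∃ z : Option V, u ∈ bagO D z ∧ v ∈ bagO D z := by
  suffices key : ∀ (u v : V) (i j : ℕ), i ≤ j →
      D.parent^[i] x = home D u →
      (∀ s ≤ j, v ∈ D.bag (D.parent^[s] x)) →
      ∃ z, u ∈ bagO D z ∧ v ∈ bagO D z by
    obtain ⟨i, hi, hieq, himem⟩ := home_anc D u x hu
    obtain ⟨j, hj, hjeq, hjmem⟩ := home_anc D v x hv
    rcases le_total i j with hij | hij
    · exact key u v i j hij hieq hjmem
    · obtain ⟨z, h1, h2⟩ := key v u j i hij hjeq himem
      exact ⟨z, h2, h1⟩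
  intro u v i j hij hieq hjmem
  have hvhu : v ∈ D.bag (home D u) := hieq ▸ hjmem i hij
  by_cases hh : home D u = home D v
  · rcases le_total u v with huv | huv
    · refine ⟨some v, ?_, mem_bagO_self D v⟩
      rw [mem_bagO_some, ← hh]
      exact ⟨home_mem D u, Or.inr huv⟩
    · refine ⟨some u, mem_bagO_self D u, ?_⟩
      rw [mem_bagO_some]
      exact ⟨hvhu, Or.inr huv⟩
  · refine ⟨some u, mem_bagO_self D u, ?_⟩
    rw [mem_bagO_some]
    exact ⟨hvhu, Or.inl (fun he => hh he.symm)⟩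

/-- the index equivalence -/
noncomputable def qE (V : Type) [Fintype V] : Fin (Fintype.card V + 1) ≃ Option V :=
  (finSuccEquiv _).trans (Equiv.optionCongr (Fintype.equivFin V).symm)

noncomputable def parF : Fin (Fintype.card V + 1) → Fin (Fintype.card V + 1) :=
  fun i => (qE V).symm (parentO D (qE V i))

noncomputable def bagF : Fin (Fintype.card V + 1) → Finset V :=
  fun i => bagO D (qE V i)

noncomputable def rootF (V : Type) [Fintype V] : Fin (Fintype.card V + 1) :=
  (qE V).symm none

noncomputable def rankF : Fin (Fintype.card V + 1) → ℕ :=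
  fun i => rankO D (qE V i)

theorem parF_root : parF D (rootF V) = rootF V := by
  rw [parF, rootF, Equiv.apply_symm_apply]
  rfl

theorem qE_ne_none {i : Fin (Fintype.card V + 1)} (hi : i ≠ rootF V) : qE V i ≠ none := by
  intro h
  exact hi (by rw [rootF, ← h, Equiv.symm_apply_apply])

theorem rankF_lt {i : Fin (Fintype.card V + 1)} (hi : i ≠ rootF V) :
    rankF D (parF D i) < rankF D i := by
  rw [rankF, rankF, parF, Equiv.apply_symm_apply]
  exact rankO_lt D (qE V i) (qE_ne_none hi)

theorem reachF : ∀ i, ∃ nn, (parF D)^[nn] i = rootF V :=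
  reach_of_rank (rootF V) (parF D) (rankF D) (parF_root D) (fun i hi => rankF_lt D hi)

theorem treeF : (parGraph (rootF V) (parF D)).IsTree :=
  parGraph_isTree (rootF V) (parF D) (reachF D) (parF_root D)

theorem parF_ne {i : Fin (Fintype.card V + 1)} (hi : i ≠ rootF V) : i ≠ parF D i := by
  intro h
  have := rankF_lt D hi
  rw [← h] at this
  exact lt_irrefl _ this

theorem adjF {i : Fin (Fintype.card V + 1)} (hi : i ≠ rootF V) :
    (parGraph (rootF V) (parF D)).Adj i (parF D i) := by
  rw [parGraph_adj]
  exact ⟨parF_ne D hi, Or.inl ⟨hi, rfl⟩⟩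

theorem vertF (v : V) : v ∈ bagF D ((qE V).symm (some v)) := by
  rw [bagF, Equiv.apply_symm_apply]
  exact mem_bagO_self D v

theorem edgeF {u v : V} (h : G.Adj u v) : ∃ i, u ∈ bagF D i ∧ v ∈ bagF D i := by
  obtain ⟨x, hu, hv⟩ := D.edge_cover h
  obtain ⟨z, h1, h2⟩ := bagO_edge D u v x hu hv
  refine ⟨(qE V).symm z, ?_, ?_⟩
  · rw [bagF, Equiv.apply_symm_apply]; exact h1
  · rw [bagF, Equiv.apply_symm_apply]; exact h2

theorem connF (v : V) (x y : Fin (Fintype.card V + 1))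
    (w : (parGraph (rootF V) (parF D)).Walk x y) (hwp : w.IsPath)
    (hx : v ∈ bagF D x) (hy : v ∈ bagF D y) : ∀ z ∈ w.support, v ∈ bagF D z := by
  have hcl : ∀ i, v ∈ bagF D i → i ≠ (qE V).symm (some v) → v ∈ bagF D (parF D i) := by
    intro i hvi hine
    rw [bagF, parF, Equiv.apply_symm_apply]
    apply bagO_closure D v (qE V i) hvi
    intro h
    exact hine (by rw [← h, Equiv.symm_apply_apply])
  have hrootn : ¬ v ∈ bagF D (rootF V) := by
    rw [bagF, rootF, Equiv.apply_symm_apply]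
    simp [bagO]
  obtain ⟨i, hi, hieq, himem⟩ := closure_chain (rootF V) (parF D) (reachF D)
    (fun i => v ∈ bagF D i) ((qE V).symm (some v)) hcl hrootn x hx
  obtain ⟨j, hj, hjeq, hjmem⟩ := closure_chain (rootF V) (parF D) (reachF D)
    (fun i => v ∈ bagF D i) ((qE V).symm (some v)) hcl hrootn y hy
  let wx := chainWalk (rootF V) (parF D) (reachF D) (parGraph (rootF V) (parF D))
    (fun a ha => adjF D ha) i x hi
  let wy := chainWalk (rootF V) (parF D) (reachF D) (parGraph (rootF V) (parF D))
    (fun a ha => adjF D ha) j y hj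
  let u : (parGraph (rootF V) (parF D)).Walk x y :=
    (wx.copy rfl hieq).append ((wy.copy rfl hjeq).reverse)
  have hw_eq : w = u.toPath.1 :=
    unique_path (rootF V) (parF D) (reachF D) (parF_root D) x y w u.toPath.1 hwp u.toPath.2
  intro z hz
  rw [hw_eq] at hz
  have hz2 : z ∈ u.support := Walk.support_toPath_subset u hz
  rw [Walk.support_append] at hz2
  rcases List.mem_append.1 hz2 with hz3 | hz3
  · rw [Walk.support_copy, chainWalk_support] at hz3
    obtain ⟨s, hs, rfl⟩ := List.mem_map.1 hz3
    exact himem s (by rw [List.mem_range] at hs; omega)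
  · have hz4 := List.mem_of_mem_tail hz3
    rw [Walk.support_reverse, List.mem_reverse, Walk.support_copy, chainWalk_support] at hz4
    obtain ⟨t, ht, rfl⟩ := List.mem_map.1 hz4
    exact hjmem t (by rw [List.mem_range] at ht; omega)

theorem uniqueF {i : Fin (Fintype.card V + 1)} (hi : i ≠ rootF V) :
    ∃! u, u ∈ bagF D i ∧ u ∉ bagF D (parF D i) := by
  obtain ⟨v, hv⟩ : ∃ v, qE V i = some v := by
    cases h : qE V i with
    | none => exact absurd h (qE_ne_none hi)
    | some v => exact ⟨v, rfl⟩
  have hb1 : bagF D i = bagO D (some v) := by rw [bagF, hv]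
  have hb2 : bagF D (parF D i) = bagO D (parentO D (some v)) := by
    rw [bagF, parF, Equiv.apply_symm_apply, hv]
  rw [hb1, hb2]
  exact bagO_uniqueHome D v

end NewD

theorem stmt0_aux {V ι : Type} [Fintype V] [LinearOrder V] (G : SimpleGraph V)
    (D : RootedTD V G ι) (k : ℕ) (hw : D.HasWidth k) :
    ∃ (m : ℕ) (D' : RootedTD V G (Fin m)), D'.HasWidth k ∧
      ∀ x, x ≠ D'.root → ∃! v, v ∈ D'.bag x ∧ v ∉ D'.bag (D'.parent x) := by
  refine ⟨Fintype.card V + 1,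
    ⟨parGraph (rootF V) (parF D), treeF D, bagF D, rootF V, parF D, parF_root D,
      fun x hx => adjF D hx, reachF D, fun v => ⟨_, vertF D v⟩,
      fun u v h => edgeF D h, connF D⟩,
    ⟨fun x => bagO_card_le D hw.1 _, ?_⟩, fun x hx => uniqueF D hx⟩
  obtain ⟨x, hx⟩ := hw.2
  obtain ⟨v, hv⟩ := bagO_attain D hw.1 x hx
  refine ⟨(qE V).symm (some v), ?_⟩
  show (bagO D (qE V ((qE V).symm (some v)))).card = k + 1
  rw [Equiv.apply_symm_apply]
  exact hv


end TDAux

/-- every rooted tree decomposition of width k can be turned into a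
rooted tree decomposition of the same width k in which every non-root node is the
home of exactly one vertex. -/
theorem stmt0 {V ι : Type} [Fintype V] (G : SimpleGraph V) (D : RootedTD V G ι) (k : ℕ)
    (hw : D.HasWidth k) :
    ∃ (m : ℕ) (D' : RootedTD V G (Fin m)), D'.HasWidth k ∧
      ∀ x, x ≠ D'.root → ∃! v, v ∈ D'.bag x ∧ v ∉ D'.bag (D'.parent x) := by
  letI : LinearOrder V := LinearOrder.lift' (Fintype.equivFin V) (Fintype.equivFin V).injective
  exact TDAux.stmt0_aux G D k hw
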